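/- (Quantization of the standard Gaussian, justification of (3.8).) Let γ_d denote the standard Gaussian measure N(0,I_d) on ℝ^d. For every p ≥ 1 there exists a constant C(p,d) such that for every M ∈ ℕ* there exists a finite set Λ ⊂ ℝ^d with at most M points satisfying (∫_{ℝ^d} min_{y∈Λ} |x − y|^p dγ_d(x))^{1/p} ≤ C(p,d) M^{−1/d}. Consequently, if Δ ~ N(0,I_d) and G_Λ denotes a nearest-point projection onto Λ, then E[|Δ − G_Λ(Δ)|^p]^{1/p} ≤ C(p,d) M^{−1/d}. -/

import Mathlib

open MeasureTheory ProbabilityTheory Real Set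
open scoped Classical ENNReal NNReal RealInnerProductSpace BigOperators

noncomputable section

/-- `ℝ^d` with the Euclidean structure. -/
abbrev Evec (d : ℕ) := EuclideanSpace ℝ (Fin d)

/-- The Gaussian measure `N(0, h I_d)` on `ℝ^d`. -/
noncomputable def gaussE (d : ℕ) (h : ℝ) : Measure (Evec d) :=
  Measure.map (⇑(EuclideanSpace.equiv (Fin d) ℝ).symm)
    (Measure.pi fun _ : Fin d => gaussianReal 0 h.toNNReal)

/-- Assumption (A): boundedness in space / linear growth in the other variables, uniform
Lipschitz continuity, uniform ellipticity of `a = σσ*`, and `H` bounded in `C^{2+α}`. -/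
structure AssumptionA (d : ℕ) (K lam alpha : ℝ)
    (b : Evec d → ℝ → Evec d → Evec d) (f : Evec d → ℝ → Evec d → ℝ)
    (sig : Evec d → ℝ → (Evec d →L[ℝ] Evec d)) (H : Evec d → ℝ) : Prop where
  hK : 0 < K
  growth_b : ∀ x y z, ‖b x y z‖ ≤ K * (1 + |y| + ‖z‖)
  growth_f : ∀ x y z, |f x y z| ≤ K * (1 + |y| + ‖z‖)
  growth_sig : ∀ x y, ‖sig x y‖ ≤ K * (1 + |y|)
  lip_b : ∀ x x' y y' z z',
    ‖b x y z - b x' y' z'‖ ≤ K * (‖x - x'‖ + |y - y'| + ‖z - z'‖)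
  lip_f : ∀ x x' y y' z z',
    |f x y z - f x' y' z'| ≤ K * (‖x - x'‖ + |y - y'| + ‖z - z'‖)
  lip_sig : ∀ x x' y y', ‖sig x y - sig x' y'‖ ≤ K * (‖x - x'‖ + |y - y'|)
  lip_H : ∀ x x', |H x - H x'| ≤ K * ‖x - x'‖
  hlam : 0 < lam
  elliptic : ∀ x y ξ,
    lam * ‖ξ‖ ^ 2 ≤ ⟪(sig x y) ((ContinuousLinearMap.adjoint (sig x y)) ξ), ξ⟫
  halpha : alpha ∈ Set.Ioo (0 : ℝ) 1
  H_smooth : ContDiff ℝ 2 H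
  H_bound : ∀ x, |H x| + ‖fderiv ℝ H x‖ + ‖fderiv ℝ (fderiv ℝ H) x‖ ≤ K
  H_holder : ∀ x x',
    ‖fderiv ℝ (fderiv ℝ H) x - fderiv ℝ (fderiv ℝ H) x'‖ ≤ K * ‖x - x'‖ ^ alpha

/-- `v(t,x) = ∇ₓu(t,x) σ(x,u(t,x))`, seen as the vector `σ(x,u(t,x))^* ∇ₓu(t,x)`. -/
def vSol {d : ℕ} (sig : Evec d → ℝ → (Evec d →L[ℝ] Evec d)) (u : ℝ → Evec d → ℝ)
    (t : ℝ) (x : Evec d) : Evec d :=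
  (ContinuousLinearMap.adjoint (sig x (u t x))) (gradient (u t) x)

/-- `tr(a(x,u) ∇²ₓₓ u) = tr(σ^* (∇²ₓₓ u) σ)`. -/
def traceTerm {d : ℕ} (sig : Evec d → ℝ → (Evec d →L[ℝ] Evec d)) (u : ℝ → Evec d → ℝ)
    (t : ℝ) (x : Evec d) : ℝ :=
  ∑ i : Fin d,
    ⟪fderiv ℝ (gradient (u t)) x ((sig x (u t x)) (EuclideanSpace.single i (1 : ℝ))),
      (sig x (u t x)) (EuclideanSpace.single i (1 : ℝ))⟫

/-- The quasi-linear PDE (E) holds at `(t,x)`. -/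
def PDEholds {d : ℕ} (b : Evec d → ℝ → Evec d → Evec d) (f : Evec d → ℝ → Evec d → ℝ)
    (sig : Evec d → ℝ → (Evec d →L[ℝ] Evec d)) (u : ℝ → Evec d → ℝ)
    (t : ℝ) (x : Evec d) : Prop :=
  deriv (fun s => u s x) t
    + ⟪b x (u t x) (vSol sig u t x), gradient (u t) x⟫
    + (1 / 2) * traceTerm sig u t x
    + f x (u t x) (vSol sig u t x) = 0

/-- `u` is a `C^{1,2}([0,T]×ℝ^d)` solution of the PDE (E). -/
structure IsSolC12 (d : ℕ) (T : ℝ) (b : Evec d → ℝ → Evec d → Evec d)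
    (f : Evec d → ℝ → Evec d → ℝ) (sig : Evec d → ℝ → (Evec d →L[ℝ] Evec d))
    (H : Evec d → ℝ) (u : ℝ → Evec d → ℝ) : Prop where
  cont : ContinuousOn (fun q : ℝ × Evec d => u q.1 q.2) (Set.Icc 0 T ×ˢ Set.univ)
  tdiff : ∀ x, ∀ t ∈ Set.Icc (0 : ℝ) T, DifferentiableAt ℝ (fun s => u s x) t
  xsmooth : ∀ t ∈ Set.Icc (0 : ℝ) T, ContDiff ℝ 2 (u t)
  pde : ∀ t ∈ Set.Ico (0 : ℝ) T, ∀ x, PDEholds b f sig u t x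
  terminal : ∀ x, u T x = H x

/-- `u` is continuous on `[0,T]×ℝ^d` and `C^{1,2}` on `[0,T)×ℝ^d`, solving (E). -/
structure IsSolOpen (d : ℕ) (T : ℝ) (b : Evec d → ℝ → Evec d → Evec d)
    (f : Evec d → ℝ → Evec d → ℝ) (sig : Evec d → ℝ → (Evec d →L[ℝ] Evec d))
    (H : Evec d → ℝ) (u : ℝ → Evec d → ℝ) : Prop where
  cont : ContinuousOn (fun q : ℝ × Evec d => u q.1 q.2) (Set.Icc 0 T ×ˢ Set.univ)
  tdiff : ∀ x, ∀ t ∈ Set.Ico (0 : ℝ) T, DifferentiableAt ℝ (fun s => u s x) t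
  xsmooth : ∀ t ∈ Set.Ico (0 : ℝ) T, ContDiff ℝ 2 (u t)
  pde : ∀ t ∈ Set.Ico (0 : ℝ) T, ∀ x, PDEholds b f sig u t x
  terminal : ∀ x, u T x = H x

/-- Regularity bounds of Theorem 2.1 with constant `C`. -/
def SolRegular (d : ℕ) (T C : ℝ) (u : ℝ → Evec d → ℝ) : Prop :=
  ∀ t ∈ Set.Icc (0 : ℝ) T, ∀ x : Evec d,
    (|u t x| + ‖gradient (u t) x‖ + ‖fderiv ℝ (gradient (u t)) x‖ +
        |deriv (fun s => u s x) t| ≤ C) ∧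
      ∀ t' ∈ Set.Icc (0 : ℝ) T,
        ‖gradient (u t) x - gradient (u t') x‖ ≤ C * |t - t'| ^ ((1 : ℝ) / 2)

/-! ### Spatial grids -/

/-- The infinite lattice `δ ℤ^d`. -/
def latticeSet (d : ℕ) (δ : ℝ) : Set (Evec d) :=
  {x | ∀ j, ∃ m : ℤ, x j = δ * m}

/-- The half-open truncation cube of radius about `r` (set `Δ_i`). -/
def cubeSet (d : ℕ) (δ r : ℝ) : Set (Evec d) :=
  {x | ∀ j, -(δ * (⌊r / δ⌋ : ℤ)) - δ / 2 ≤ x j ∧ x j < δ * (⌊r / δ⌋ : ℤ) + δ / 2}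

/-- The truncated grid `C_i = δℤ^d ∩ Δ_i`. -/
def gridC (d : ℕ) (δ r : ℝ) : Set (Evec d) := latticeSet d δ ∩ cubeSet d δ r

/-- Projection `Π_∞` on the lattice `δ ℤ^d`. -/
def projInf (d : ℕ) (δ : ℝ) (x : Evec d) : Evec d :=
  (EuclideanSpace.equiv (Fin d) ℝ).symm fun j => δ * (⌊x j / δ + 1 / 2⌋ : ℤ)

/-- Componentwise projection `Q(r,·)` on the hypercube `[-δ⌊r/δ⌋, δ⌊r/δ⌋]^d`. -/
def projQ (d : ℕ) (δ r : ℝ) (y : Evec d) : Evec d :=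
  (EuclideanSpace.equiv (Fin d) ℝ).symm fun j =>
    max (-(δ * (⌊r / δ⌋ : ℤ))) (min (δ * (⌊r / δ⌋ : ℤ)) (y j))

/-- The projection `Π_i = Q(r, Π_∞(·))` on the truncated grid of radius `r`. -/
def projTrunc (d : ℕ) (δ r : ℝ) (x : Evec d) : Evec d := projQ d δ r (projInf d δ x)

/-- Quantized increment `g(w) = h^{1/2} G(h^{-1/2} w)`. -/
def quantz {d : ℕ} (G : Evec d → Evec d) (h : ℝ) (w : Evec d) : Evec d :=
  Real.sqrt h • G ((Real.sqrt h)⁻¹ • w)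

/-- Sup norm `|z|_∞` on `ℝ^d`. -/
def supN {d : ℕ} (z : Evec d) : ℝ := ⨆ j : Fin d, |z j|

/-! ### Error terms -/

def Etime (h : ℝ) : ℝ := Real.sqrt h
def Espace (h δ : ℝ) : ℝ := h⁻¹ * δ
def Etrunc (R ρ : ℝ) : ℝ := R / (R + ρ)
def Equant (d : ℕ) (h : ℝ) (M : ℕ) : ℝ := (Real.sqrt h)⁻¹ * (M : ℝ) ^ (-(1 / (d : ℝ)))
def Egrad (d : ℕ) (h δ : ℝ) (M : ℕ) (p : ℝ) : ℝ :=
  h ^ (p / 2 + (d : ℝ) / 4 - 1 / 2) * (M : ℝ) ^ (-(p / (d : ℝ))) * δ ^ (-(p + (d : ℝ) / 2))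
def EglobSq (d : ℕ) (h δ R ρ : ℝ) (M : ℕ) (p : ℝ) : ℝ :=
  Etime h ^ 2 + Espace h δ ^ 2 + Etrunc R ρ ^ 2 + Equant d h M ^ 2 + Egrad d h δ M p ^ 2

/-! ### The discretization data and Algorithm 3.1 -/

/-- All the data entering Algorithm 3.1. -/
structure Disc (d : ℕ) where
  b : Evec d → ℝ → Evec d → Evec d
  f : Evec d → ℝ → Evec d → ℝ
  sig : Evec d → ℝ → (Evec d →L[ℝ] Evec d)
  H : Evec d → ℝ
  G : Evec d → Evec d
  h : ℝ
  δ : ℝ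
  R : ℝ
  ρ : ℝ
  M : ℕ
  N : ℕ

namespace Disc

variable {d : ℕ}

/-- Radius of the grid `C_i`. -/
def radAt (S : Disc d) (i : ℕ) : ℝ := if i = 0 then S.R else S.R + S.ρ

/-- The projection `Π_{k+1}` (radius `R + ρ`). -/
def proj1 (S : Disc d) (x : Evec d) : Evec d := projTrunc d S.δ (S.R + S.ρ) x

/-- The intermediate gradient predictor `v̂` built from the data at the next time. -/
def vhatOf (S : Disc d) (ub : Evec d → ℝ) (vb : Evec d → Evec d) (x : Evec d) : Evec d :=
  ∫ w, vb (S.proj1 (x + (S.sig x (ub x)) (quantz S.G S.h w))) ∂(gaussE d S.h)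

/-- The transition `T(t_k, x)` as a function of the increment `w`. -/
def transOf (S : Disc d) (ub : Evec d → ℝ) (vb : Evec d → Evec d) (x w : Evec d) : Evec d :=
  S.h • S.b x (ub x) (S.vhatOf ub vb x) + (S.sig x (ub x)) (quantz S.G S.h w)

/-- One-step update of the gradient approximation `v̄`. -/
def vstep (S : Disc d) (ub : Evec d → ℝ) (vb : Evec d → Evec d) (x : Evec d) : Evec d :=
  S.h⁻¹ • ∫ w, ub (S.proj1 (x + S.transOf ub vb x w)) • quantz S.G S.h w ∂(gaussE d S.h)

/-- One-step update of the solution approximation `ū`. -/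
def ustep (S : Disc d) (ub : Evec d → ℝ) (vb : Evec d → Evec d) (x : Evec d) : ℝ :=
  (∫ w, ub (S.proj1 (x + S.transOf ub vb x w)) ∂(gaussE d S.h)) +
    S.f x (ub x) (S.vstep ub vb x) * S.h

/-- Backward recursion of Algorithm 3.1; `algAux j` are the values `(ū, v̄)` at time
index `N - j`. -/
def algAux (S : Disc d) : ℕ → (Evec d → ℝ) × (Evec d → Evec d)
  | 0 => (S.H, fun x => (ContinuousLinearMap.adjoint (S.sig x (S.H x))) (gradient S.H x))
  | j + 1 => (S.ustep (S.algAux j).1 (S.algAux j).2, S.vstep (S.algAux j).1 (S.algAux j).2)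

/-- `ū(t_k, ·)`. -/
def ubar (S : Disc d) (k : ℕ) : Evec d → ℝ := (S.algAux (S.N - k)).1

/-- `v̄(t_k, ·)`. -/
def vbar (S : Disc d) (k : ℕ) : Evec d → Evec d := (S.algAux (S.N - k)).2

/-- `v̂(t_k, ·)`. -/
def vhat (S : Disc d) (k : ℕ) : Evec d → Evec d := S.vhatOf (S.ubar (k + 1)) (S.vbar (k + 1))

/-- The transition `T(t_k, x)` of Algorithm 3.1, as a function of the increment. -/
def trans (S : Disc d) (k : ℕ) (x w : Evec d) : Evec d :=
  S.transOf (S.ubar (k + 1)) (S.vbar (k + 1)) x w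

variable {Ω : Type}

/-- The discrete forward process started from `ξ` at time index `i`. -/
def Xfrom (S : Disc d) (ΔB : ℕ → Ω → Evec d) (i : ℕ) (ξ : Ω → Evec d) : ℕ → Ω → Evec d
  | 0 => ξ
  | k + 1 =>
    if k + 1 ≤ i then ξ
    else fun ω =>
      S.proj1 (S.Xfrom ΔB i ξ k ω + S.trans k (S.Xfrom ΔB i ξ k ω) (ΔB k ω))

/-- The discrete forward process started from `x₀` at time `0`. -/
def Xproc (S : Disc d) (ΔB : ℕ → Ω → Evec d) (x0 : Evec d) : ℕ → Ω → Evec d :=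
  S.Xfrom ΔB 0 fun _ => x0

/-- The chain (started at `(t_i, ξ)`) attempts to exit the truncation cube at step `m`. -/
def viol (S : Disc d) (ΔB : ℕ → Ω → Evec d) (i : ℕ) (ξ : Ω → Evec d) (m : ℕ) (ω : Ω) :
    Prop :=
  S.Xfrom ΔB i ξ m ω + S.trans m (S.Xfrom ΔB i ξ m ω) (ΔB m ω) ∉ cubeSet d S.δ (S.R + S.ρ)

/-- The event `{t_k < τ_∞}`: no exit up to time `t_k`. -/
def noExit (S : Disc d) (ΔB : ℕ → Ω → Evec d) (i : ℕ) (ξ : Ω → Evec d) (k : ℕ) (ω : Ω) :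
    Prop :=
  ∀ m, i ≤ m → m < k → ¬S.viol ΔB i ξ m ω

/-- The event `{τ_∞ < +∞}`. -/
def exitEvent (S : Disc d) (ΔB : ℕ → Ω → Evec d) (i : ℕ) (ξ : Ω → Evec d) : Set Ω :=
  {ω | ∃ m, i ≤ m ∧ m < S.N ∧ S.viol ΔB i ξ m ω}

/-- The time index of `τ_∞` (equal to `N + 1` when `τ_∞ = +∞`). -/
def tauIdx (S : Disc d) (ΔB : ℕ → Ω → Evec d) (i : ℕ) (ξ : Ω → Evec d) (ω : Ω) : ℕ :=
  if hv : ∃ m, i ≤ m ∧ m < S.N ∧ S.viol ΔB i ξ m ω then Nat.find hv + 1 else S.N + 1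

/-- The supremum `‖Σ‖_∞` of `σ(x, ū(t_k, x))` over the grids. -/
def sigNorm (S : Disc d) : ℝ :=
  ⨆ k : Fin (S.N + 1), ⨆ x : ↥(gridC d S.δ (S.radAt k)), ‖S.sig (x : Evec d) (S.ubar k x)‖

end Disc

/-- The discrete filtration `F_{t_k}` generated by the increments `ΔB^0, …, ΔB^{k-1}`. -/
def filtOf {d : ℕ} {Ω : Type} (ΔB : ℕ → Ω → Evec d) (k : ℕ) : MeasurableSpace Ω :=
  ⨆ m ∈ Finset.range k, MeasurableSpace.comap (ΔB m) inferInstance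

/-- Standing assumptions on the discretization data, with smallness threshold `c` for `h`. -/
structure GoodSetting (d : ℕ) (T K lam alpha : ℝ) (CQ : ℝ → ℝ) (c : ℝ) (S : Disc d) :
    Prop where
  hd : 0 < d
  hT : 0 < T
  hA : AssumptionA d K lam alpha S.b S.f S.sig S.H
  hN : 0 < S.N
  hh : S.h = T / S.N
  hhc : S.h < c
  hδpos : 0 < S.δ
  hδh : S.δ ^ 2 < S.h
  hMpos : 0 < S.M
  hMh : (S.M : ℝ) ^ (-(2 / (d : ℝ))) < S.h
  hR : 0 < S.R
  hρ : 1 ≤ S.ρ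
  hGmeas : Measurable S.G
  hGnear : ∃ Λ : Finset (Evec d), Λ.Nonempty ∧ Λ.card = S.M ∧
    ∀ w, S.G w ∈ Λ ∧ ∀ y ∈ Λ, ‖w - S.G w‖ ≤ ‖w - y‖
  hquant : ∀ q : ℝ, 1 ≤ q →
    (∫ w, ‖quantz S.G S.h w - w‖ ^ q ∂(gaussE d S.h)) ≤
      (CQ q * Real.sqrt S.h * (S.M : ℝ) ^ (-(1 / (d : ℝ)))) ^ q

/-- Standing assumptions on the driving noise: i.i.d. `N(0, h I_d)` increments. -/
structure GoodProb {d : ℕ} (S : Disc d) {Ω : Type} [MeasurableSpace Ω] (P : Measure Ω)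
    (ΔB : ℕ → Ω → Evec d) : Prop where
  hP : IsProbabilityMeasure P
  hmeas : ∀ k, Measurable (ΔB k)
  hlaw : ∀ k, Measure.map (ΔB k) P = gaussE d S.h
  hindep : iIndepFun ΔB P

end

noncomputable section QuantAuxSection
namespace QuantAux


/-- transfer integral over gaussian to Lebesgue with density -/
lemma gauss_integral_eq (g : ℝ → ℝ) :
    ∫ s, g s ∂(gaussianReal 0 1) = ∫ s, gaussianPDFReal 0 1 s * g s := by
  rw [gaussianReal_of_var_ne_zero _ one_ne_zero, gaussianPDF_def]
  have h1 : (fun x => ENNReal.ofReal (gaussianPDFReal 0 1 x))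
      = fun x => ((Real.toNNReal (gaussianPDFReal 0 1 x) : ℝ≥0) : ℝ≥0∞) := rfl
  rw [h1, integral_withDensity_eq_integral_smul
    (measurable_gaussianPDFReal 0 1).real_toNNReal]
  refine integral_congr_ae (Filter.Eventually.of_forall fun x => ?_)
  simp only [NNReal.smul_def, smul_eq_mul]
  rw [Real.coe_toNNReal _ (gaussianPDFReal_nonneg 0 1 x)]

lemma gauss_integrable_iff (g : ℝ → ℝ) :
    Integrable g (gaussianReal 0 1) ↔
      Integrable (fun s => gaussianPDFReal 0 1 s * g s) volume := by
  rw [gaussianReal_of_var_ne_zero _ one_ne_zero, gaussianPDF_def]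
  have h1 : (fun x => ENNReal.ofReal (gaussianPDFReal 0 1 x))
      = fun x => ((Real.toNNReal (gaussianPDFReal 0 1 x) : ℝ≥0) : ℝ≥0∞) := rfl
  rw [h1, integrable_withDensity_iff_integrable_smul
    (measurable_gaussianPDFReal 0 1).real_toNNReal]
  refine integrable_congr (Filter.Eventually.of_forall fun x => ?_)
  simp only [NNReal.smul_def, smul_eq_mul]
  rw [Real.coe_toNNReal _ (gaussianPDFReal_nonneg 0 1 x)]

lemma pdf_mul_exp (s : ℝ) :
    gaussianPDFReal 0 1 s * Real.exp (7 * s ^ 2 / 16)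
      = (Real.sqrt (2 * π))⁻¹ * Real.exp (-(1/16) * s ^ 2) := by
  rw [gaussianPDFReal]
  push_cast
  rw [mul_assoc, ← Real.exp_add]
  ring_nf

lemma exp_sq_integrable : Integrable (fun s => Real.exp (7 * s ^ 2 / 16)) (gaussianReal 0 1) := by
  rw [gauss_integrable_iff]
  have : (fun s => gaussianPDFReal 0 1 s * Real.exp (7 * s ^ 2 / 16))
      = fun s => (Real.sqrt (2 * π))⁻¹ * Real.exp (-(1/16) * s ^ 2) := by
    funext s; exact pdf_mul_exp s
  rw [this]
  exact (integrable_exp_neg_mul_sq (by norm_num)).const_mul _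

lemma exp_sq_integral_le : ∫ s, Real.exp (7 * s ^ 2 / 16) ∂(gaussianReal 0 1) ≤ 3 := by
  rw [gauss_integral_eq]
  have : (fun s => gaussianPDFReal 0 1 s * Real.exp (7 * s ^ 2 / 16))
      = fun s => (Real.sqrt (2 * π))⁻¹ * Real.exp (-(1/16) * s ^ 2) := by
    funext s; exact pdf_mul_exp s
  rw [this, integral_const_mul]
  have h2 : ∫ s : ℝ, Real.exp (-(1/16) * s ^ 2) = Real.sqrt (π / (1/16)) :=
    integral_gaussian (1/16)
  rw [h2]
  have hπ : 0 < Real.sqrt (2 * π) := Real.sqrt_pos.2 (by positivity)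
  rw [inv_mul_le_iff₀ hπ]
  have : Real.sqrt (π / (1/16)) = Real.sqrt (16 * π) := by congr 1; ring
  rw [this]
  calc Real.sqrt (16 * π) ≤ Real.sqrt (9 * (2 * π)) := by
        apply Real.sqrt_le_sqrt; nlinarith [Real.pi_pos]
    _ = 3 * Real.sqrt (2 * π) := by
        rw [Real.sqrt_mul (by norm_num)]
        norm_num [Real.sqrt_eq_iff_eq_sq]
    _ = √(2 * π) * 3 := by ring
  


variable {p : ℝ}

/-- `v ^ p ≤ e^(p²) e^(v²/4)` for `v ≥ 0`. -/
lemma rpow_le_exp_sq (hp : 1 ≤ p) {v : ℝ} (hv : 0 ≤ v) :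
    v ^ p ≤ Real.exp (p ^ 2) * Real.exp (v ^ 2 / 4) := by
  have h1 : v ^ p ≤ Real.exp (v * p) := by
    calc v ^ p ≤ (Real.exp v) ^ p := by
          apply Real.rpow_le_rpow hv _ (by linarith)
          linarith [Real.add_one_le_exp v]
      _ = Real.exp (v * p) := (Real.exp_mul v p).symm
  calc v ^ p ≤ Real.exp (v * p) := h1
    _ ≤ Real.exp (p ^ 2 + v ^ 2 / 4) := by
        apply Real.exp_le_exp.2; nlinarith [sq_nonneg (v / 2 - p)]
    _ = _ := Real.exp_add _ _

/-- key pointwise tail bound -/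
lemma tail_pointwise (hp : 1 ≤ p) {K : ℝ} (hK : 0 ≤ K) (s : ℝ) :
    (max (|s| - K) 0) ^ p ≤
      Real.exp (p ^ 2) * Real.exp (-K ^ 2 / 4) * Real.exp (7 * s ^ 2 / 16) := by
  rcases le_or_gt (|s|) K with h | h
  · rw [max_eq_right (by linarith), Real.zero_rpow (by linarith)]
    positivity
  · set v := |s| - K with hv
    rw [max_eq_left (by linarith)]
    have hv0 : 0 ≤ v := by linarith
    have hs : s ^ 2 = (v + K) ^ 2 := by rw [← sq_abs, hv]; ring
    calc v ^ p ≤ Real.exp (p ^ 2) * Real.exp (v ^ 2 / 4) := rpow_le_exp_sq hp hv0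
      _ ≤ Real.exp (p ^ 2) * (Real.exp (-K ^ 2 / 4) * Real.exp (7 * s ^ 2 / 16)) := by
          apply mul_le_mul_of_nonneg_left _ (Real.exp_pos _).le
          rw [← Real.exp_add]
          apply Real.exp_le_exp.2
          rw [hs]; nlinarith [sq_nonneg (v - K), sq_nonneg (v + K), mul_nonneg hv0 hK]
      _ = _ := by ring

/-- `e^(a|s|) ≤ e^(a²) e^(7s²/16)` for `a ≥ 0`. -/
lemma exp_abs_le (a : ℝ) (s : ℝ) :
    Real.exp (a * |s|) ≤ Real.exp (a ^ 2) * Real.exp (7 * s ^ 2 / 16) := by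
  rw [← Real.exp_add]
  apply Real.exp_le_exp.2
  have : s ^ 2 = |s| ^ 2 := (sq_abs s).symm
  nlinarith [sq_nonneg (|s| / 2 - a), abs_nonneg s, sq_nonneg s]

/-- continuity of a finite inf. -/
lemma continuous_inf' {ι : Type*} {X : Type*} [TopologicalSpace X] (s : Finset ι)
    (hs : s.Nonempty) (f : ι → X → ℝ) (hf : ∀ i, Continuous (f i)) :
    Continuous fun x => s.inf' hs fun i => f i x := by
  induction hs using Finset.Nonempty.cons_induction with
  | singleton i => simpa using hf i
  | cons i s hi hs ih =>
      have he : (fun x => (Finset.cons i s hi).inf' (Finset.cons_nonempty hi) fun j => f j x)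
          = fun x => min (f i x) (s.inf' hs fun j => f j x) := by
        funext x
        rw [Finset.inf'_cons (H := hs)]
      rw [he]
      exact (hf i).min ih



set_option maxHeartbeats 2000000 in
lemma grid_exists (p : ℝ) (hp : 1 ≤ p) (m : ℕ) (hm : 1024 * (p + 1) + 64 ≤ (m : ℝ)) :
    ∃ (Λ : Finset ℝ) (h : Λ.Nonempty) (K : ℝ), 0 ≤ K ∧ 4 * p * Real.log m ≤ K ^ 2 ∧
      (Λ.card : ℝ) ≤ m ∧
      ∀ s : ℝ, (Λ.inf' h fun t => |s - t| ^ p) ≤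
        ((8 / m) * Real.exp (Real.log 2 * |s|)) ^ p + (max (|s| - K) 0) ^ p := by
  have hm0 : (0:ℝ) < m := by nlinarith
  have hm1 : (1:ℝ) ≤ m := by nlinarith
  have hlog0 : 0 ≤ Real.log m := Real.log_nonneg hm1
  obtain ⟨Kr, hKr0, hKsqr, hKrm⟩ : ∃ Kr : ℝ, 0 ≤ Kr ∧ Kr ^ 2 = 4 * p * Real.log m ∧
      Kr ≤ (m:ℝ)/16 := by
    refine ⟨Real.sqrt (4 * p * Real.log m), Real.sqrt_nonneg _,
      Real.sq_sqrt (by positivity), ?_⟩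
    have k1 : Real.sqrt (4 * p * Real.log m) ≤ Real.sqrt (4 * p * m) := by
      apply Real.sqrt_le_sqrt
      have := Real.log_le_sub_one_of_pos hm0
      nlinarith
    have k2 : Real.sqrt (4 * p * m) = 2 * Real.sqrt (p * m) := by
      rw [show 4 * p * (m:ℝ) = 4 * (p * m) by ring,
        Real.sqrt_mul (by norm_num) (p * m),
        show (4:ℝ) = 2^2 by norm_num, Real.sqrt_sq (by norm_num : (0:ℝ) ≤ 2)]
    have k3 : Real.sqrt (p * m) ≤ (m:ℝ)/32 := by
      have : p * m ≤ ((m:ℝ)/32)^2 := by nlinarith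
      calc Real.sqrt (p * m) ≤ Real.sqrt (((m:ℝ)/32)^2) := Real.sqrt_le_sqrt this
        _ = (m:ℝ)/32 := Real.sqrt_sq (by positivity)
    calc Real.sqrt (4 * p * Real.log m) ≤ 2 * Real.sqrt (p * m) := k1.trans_eq k2
      _ ≤ 2 * ((m:ℝ)/32) := by linarith
      _ = (m:ℝ)/16 := by ring
  set K : ℕ := ⌈Kr⌉₊ with hKdef
  have hKrK : Kr ≤ (K : ℝ) := Nat.le_ceil _
  have hK1 : (K:ℝ) ≤ Kr + 1 := le_of_lt (Nat.ceil_lt_add_one hKr0)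
  clear_value K
  have hKsq : 4 * p * Real.log m ≤ (K:ℝ) ^ 2 := by nlinarith
  obtain ⟨n, hn0, hnge, hnle⟩ : ∃ n : ℕ → ℕ,
      (∀ k, (0:ℝ) < (n k : ℝ)) ∧ (∀ k, (m:ℝ) / (8 * 2 ^ k) ≤ (n k : ℝ)) ∧
      (∀ k, (n k : ℝ) ≤ (m:ℝ)/8 * (1/2)^k + 2) := by
    refine ⟨fun k => ⌈(m:ℝ) / (8 * 2 ^ k)⌉₊ + 1, fun k => by positivity, fun k => ?_, fun k => ?_⟩
    · have h1 := Nat.le_ceil ((m:ℝ) / (8 * 2 ^ k))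
      push_cast
      linarith
    · have h1 := Nat.ceil_lt_add_one (a := (m:ℝ) / (8 * 2 ^ k)) (by positivity)
      have he : (m:ℝ) / (8 * 2 ^ k) = (m:ℝ)/8 * (1/2)^k := by
        rw [one_div, inv_pow]
        have h2k : ((2:ℝ) ^ k) ≠ 0 := by positivity
        field_simp
      push_cast
      linarith [he ▸ h1]
  set pts : ℕ → Finset ℝ := fun k =>
    (Finset.range (n k + 1)).image (fun i : ℕ => (k:ℝ) + (i:ℝ) / (n k)) with hpts
  set Λp : Finset ℝ := ((Finset.range K).biUnion pts) ∪ {(K:ℝ)} with hΛp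
  set Λ : Finset ℝ := Λp ∪ Λp.image (fun t => -t) with hΛ
  have hKmem : (K:ℝ) ∈ Λp := Finset.mem_union_right _ (Finset.mem_singleton_self _)
  have hKmem' : (K:ℝ) ∈ Λ := Finset.mem_union_left _ hKmem
  have hKmem'' : -(K:ℝ) ∈ Λ := Finset.mem_union_right _ (Finset.mem_image_of_mem _ hKmem)
  have hne : Λ.Nonempty := ⟨_, hKmem'⟩
  -- covering claim
  have cover : ∀ u : ℝ, 0 ≤ u → u < (K:ℝ) →
      ∃ t ∈ Λp, 0 ≤ u - t ∧ u - t ≤ (8 / m) * Real.exp (Real.log 2 * u) := by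
    intro u hu0 huK
    obtain ⟨k, hku, huk, hkK⟩ : ∃ k : ℕ, (k:ℝ) ≤ u ∧ u < (k:ℝ) + 1 ∧ k < K :=
      ⟨⌊u⌋₊, Nat.floor_le hu0, Nat.lt_floor_add_one u, (Nat.floor_lt hu0).2 huK⟩
    have hN0 : (0:ℝ) < ((n k : ℕ) : ℝ) := hn0 k
    obtain ⟨i, h1, h2, hiN⟩ : ∃ i : ℕ, (i:ℝ) ≤ (u - k) * (n k) ∧
        (u - k) * (n k) < (i:ℝ) + 1 ∧ i < n k + 1 := by
      refine ⟨⌊(u - k) * (n k)⌋₊, Nat.floor_le (by nlinarith), Nat.lt_floor_add_one _, ?_⟩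
      apply (Nat.floor_lt (by nlinarith)).2
      push_cast
      nlinarith
    refine ⟨(k:ℝ) + (i:ℝ) / (n k), ?_, ?_, ?_⟩
    · refine Finset.mem_union_left _ (Finset.mem_biUnion.2 ⟨k, Finset.mem_range.2 hkK, ?_⟩)
      exact Finset.mem_image.2 ⟨i, Finset.mem_range.2 hiN, rfl⟩
    · have : (i:ℝ) / (n k) ≤ u - k := by
        rw [div_le_iff₀ hN0]; linarith
      linarith
    · have hNe : ((n k : ℕ) : ℝ) ≠ 0 := ne_of_gt hN0
      have hstep : u - ((k:ℝ) + (i:ℝ) / (n k)) ≤ 1 / (n k) := by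
        rw [le_div_iff₀ hN0]
        have he : (u - ((k:ℝ) + (i:ℝ) / (n k))) * (n k) = (u - k) * (n k) - i := by
          field_simp
          ring
        rw [he]
        linarith
      have h3 : 1 / ((n k : ℕ) : ℝ) ≤ (8 * 2 ^ k) / m := by
        rw [div_le_div_iff₀ hN0 hm0]
        have := hnge k
        rw [div_le_iff₀ (by positivity : (0:ℝ) < 8 * 2 ^ k)] at this
        linarith
      have h4 : (8 * (2:ℝ) ^ k) / m ≤ (8 / m) * Real.exp (Real.log 2 * u) := by
        have h5 : (2:ℝ) ^ k = Real.exp ((k:ℝ) * Real.log 2) := by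
          rw [Real.exp_nat_mul, Real.exp_log two_pos]
        have h6 : Real.exp ((k:ℝ) * Real.log 2) ≤ Real.exp (Real.log 2 * u) := by
          apply Real.exp_le_exp.2
          have hl2 : 0 ≤ Real.log 2 := Real.log_nonneg one_le_two
          nlinarith
        rw [h5, div_le_iff₀ hm0]
        calc 8 * Real.exp ((k:ℝ) * Real.log 2)
            ≤ 8 * Real.exp (Real.log 2 * u) :=
              mul_le_mul_of_nonneg_left h6 (by norm_num)
          _ = 8 / m * Real.exp (Real.log 2 * u) * m := by field_simp
      linarith
  -- master pointwise bound
  have master : ∀ s : ℝ, (Λ.inf' hne fun t => |s - t| ^ p) ≤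
      ((8 / m) * Real.exp (Real.log 2 * |s|)) ^ p + (max (|s| - K) 0) ^ p := by
    intro s
    rcases lt_or_ge (|s|) (K:ℝ) with hc | hc
    · obtain ⟨t, htΛp, h0, h1⟩ := cover (|s|) (abs_nonneg s) hc
      obtain ⟨t', ht', habs⟩ : ∃ t' ∈ Λ, |s - t'| = |s| - t := by
        rcases le_or_gt 0 s with hs | hs
        · refine ⟨t, Finset.mem_union_left _ htΛp, ?_⟩
          rw [abs_of_nonneg hs] at h0 h1 ⊢
          rw [abs_of_nonneg h0]
        · refine ⟨-t, Finset.mem_union_right _ (Finset.mem_image_of_mem _ htΛp), ?_⟩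
          rw [abs_of_neg hs] at h0 h1 ⊢
          rw [show s - -t = -(-s - t) by ring, abs_neg, abs_of_nonneg h0]
      have hle : (Λ.inf' hne fun t => |s - t| ^ p) ≤ |s - t'| ^ p :=
        Finset.inf'_le _ ht'
      have h7 : |s - t'| ^ p ≤ ((8 / m) * Real.exp (Real.log 2 * |s|)) ^ p := by
        rw [habs]
        exact Real.rpow_le_rpow h0 h1 (by linarith)
      have hmax : (0:ℝ) ≤ (max (|s| - K) 0) ^ p :=
        Real.rpow_nonneg (le_max_right _ _) _
      linarith
    · have ht' : ∃ t' ∈ Λ, |s - t'| = |s| - (K:ℝ) := by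
        rcases le_or_gt 0 s with hs | hs
        · refine ⟨(K:ℝ), hKmem', ?_⟩
          rw [abs_of_nonneg hs] at hc ⊢
          rw [abs_of_nonneg (by linarith)]
        · refine ⟨-(K:ℝ), hKmem'', ?_⟩
          rw [abs_of_neg hs] at hc ⊢
          rw [show s - -(K:ℝ) = -(-s - K) by ring, abs_neg, abs_of_nonneg (by linarith)]
      obtain ⟨t', ht', habs⟩ := ht'
      have hle : (Λ.inf' hne fun t => |s - t| ^ p) ≤ |s - t'| ^ p :=
        Finset.inf'_le _ ht'
      have heq : |s - t'| ^ p = (max (|s| - K) 0) ^ p := by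
        rw [habs, max_eq_left (by linarith)]
      have hpos : (0:ℝ) ≤ ((8 / m) * Real.exp (Real.log 2 * |s|)) ^ p :=
        Real.rpow_nonneg (by positivity) _
      linarith [hle.trans_eq heq]
  -- cardinality
  have hcard : (Λ.card : ℝ) ≤ m := by
    have c1 : Λ.card ≤ 2 * Λp.card := by
      calc Λ.card ≤ Λp.card + (Λp.image (fun t => -t)).card := Finset.card_union_le _ _
        _ ≤ Λp.card + Λp.card := by
            have := Finset.card_image_le (s := Λp) (f := fun t : ℝ => -t)
            omega
        _ = 2 * Λp.card := by ring
    have c2 : Λp.card ≤ (∑ k ∈ Finset.range K, (n k + 1)) + 1 := by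
      calc Λp.card ≤ ((Finset.range K).biUnion pts).card + ({(K:ℝ)} : Finset ℝ).card :=
            Finset.card_union_le _ _
        _ ≤ (∑ k ∈ Finset.range K, (pts k).card) + 1 := by
            have := Finset.card_biUnion_le (s := Finset.range K) (t := pts)
            simp only [Finset.card_singleton]
            omega
        _ ≤ (∑ k ∈ Finset.range K, (n k + 1)) + 1 := by
            gcongr with k hk
            calc (pts k).card ≤ (Finset.range (n k + 1)).card := Finset.card_image_le
              _ = n k + 1 := Finset.card_range _
    have c3 : (∑ k ∈ Finset.range K, ((n k : ℝ) + 1)) ≤ (m:ℝ)/4 + 3 * K := by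
      have hterm : ∀ k ∈ Finset.range K, (n k : ℝ) + 1 ≤ (m:ℝ)/8 * (1/2)^k + 3 := by
        intro k _
        have := hnle k
        linarith
      calc (∑ k ∈ Finset.range K, ((n k : ℝ) + 1))
          ≤ ∑ k ∈ Finset.range K, ((m:ℝ)/8 * (1/2)^k + 3) := Finset.sum_le_sum hterm
        _ = (m:ℝ)/8 * (∑ k ∈ Finset.range K, (1/(2:ℝ))^k) + 3 * K := by
            rw [Finset.sum_add_distrib, ← Finset.mul_sum]
            simp [mul_comm]
        _ ≤ (m:ℝ)/8 * 2 + 3 * K := by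
            have := sum_geometric_two_le K
            have h8 : (0:ℝ) ≤ (m:ℝ)/8 := by positivity
            nlinarith
        _ = (m:ℝ)/4 + 3 * K := by ring
    have c4 : (Λ.card : ℝ) ≤ 2 * ((∑ k ∈ Finset.range K, ((n k:ℝ) + 1)) + 1) := by
      have h9 : Λ.card ≤ 2 * ((∑ k ∈ Finset.range K, (n k + 1)) + 1) := by omega
      have h10 := (Nat.cast_le (α := ℝ)).2 h9
      push_cast at h10
      linarith
    have cK : (K:ℝ) ≤ (m:ℝ)/16 + 1 := by linarith
    nlinarith
  exact ⟨Λ, hne, (K:ℝ), Nat.cast_nonneg _, hKsq, hcard, master⟩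



set_option maxHeartbeats 1000000 in
lemma oneD (p : ℝ) (hp : 1 ≤ p) :
    ∃ C : ℝ, 0 < C ∧ ∀ m : ℕ, 0 < m →
      ∃ (Λ : Finset ℝ) (h : Λ.Nonempty), (Λ.card : ℝ) ≤ m ∧
        Integrable (fun s => Λ.inf' h fun t => |s - t| ^ p) (gaussianReal 0 1) ∧
        ∫ s, (Λ.inf' h fun t => |s - t| ^ p) ∂(gaussianReal 0 1) ≤ C ^ p * (m:ℝ) ^ (-p) := by
  have hp0 : 0 < p := by linarith
  set m₀ : ℝ := 1024 * (p + 1) + 64 with hm₀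
  set A : ℝ := 3 * ((8:ℝ) ^ p * Real.exp ((p * Real.log 2) ^ 2) + Real.exp (p ^ 2)) with hA
  have hA0 : 0 < A := by positivity
  have hm₀1 : (1:ℝ) ≤ m₀ + 1 := by nlinarith
  set D : ℝ := A + 3 * Real.exp (p ^ 2) * (m₀ + 1) ^ p + 1 with hD
  have hD0 : 0 < D := by positivity
  refine ⟨D ^ p⁻¹, Real.rpow_pos_of_pos hD0 _, ?_⟩
  have hCp : (D ^ p⁻¹) ^ p = D := Real.rpow_inv_rpow hD0.le (ne_of_gt hp0)
  intro m hm
  have hm1 : (1:ℝ) ≤ (m:ℝ) := by exact_mod_cast hm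
  have hmpos : (0:ℝ) < m := by linarith
  have hmp : (0:ℝ) < (m:ℝ) ^ (-p) := Real.rpow_pos_of_pos hmpos _
  -- continuity and nonnegativity of the inf function, generic
  have hFcont : ∀ (Λ : Finset ℝ) (h : Λ.Nonempty),
      Continuous (fun s => Λ.inf' h fun t => |s - t| ^ p) := by
    intro Λ h
    apply continuous_inf'
    intro t
    exact (Real.continuous_rpow_const hp0.le).comp
      ((continuous_id.sub continuous_const).abs)
  have hFnn : ∀ (Λ : Finset ℝ) (h : Λ.Nonempty) (s : ℝ),
      0 ≤ Λ.inf' h fun t => |s - t| ^ p := by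
    intro Λ h s
    exact Finset.le_inf' h _ fun t _ => Real.rpow_nonneg (abs_nonneg _) _
  rcases le_or_gt m₀ (m:ℝ) with hbig | hsmall
  · obtain ⟨Λ, hne, K, hK0, hKsq, hcard, master⟩ := grid_exists p hp m hbig
    set B : ℝ := (8/(m:ℝ)) ^ p * Real.exp ((p * Real.log 2) ^ 2)
        + Real.exp (p ^ 2) * Real.exp (-K ^ 2 / 4) with hB
    have hB0 : 0 ≤ B := by positivity
    have hptw : ∀ s : ℝ, (Λ.inf' hne fun t => |s - t| ^ p)
        ≤ B * Real.exp (7 * s ^ 2 / 16) := by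
      intro s
      have h1 := master s
      have h2 : ((8 / (m:ℝ)) * Real.exp (Real.log 2 * |s|)) ^ p
          ≤ (8/(m:ℝ)) ^ p * (Real.exp ((p * Real.log 2) ^ 2) * Real.exp (7 * s ^ 2 / 16)) := by
        rw [Real.mul_rpow (by positivity) (Real.exp_nonneg _), ← Real.exp_mul]
        apply mul_le_mul_of_nonneg_left _ (by positivity)
        calc Real.exp (Real.log 2 * |s| * p) = Real.exp ((p * Real.log 2) * |s|) := by
              ring_nf
          _ ≤ _ := exp_abs_le _ s
      have h3 := tail_pointwise hp hK0 s
      calc (Λ.inf' hne fun t => |s - t| ^ p)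
          ≤ ((8 / (m:ℝ)) * Real.exp (Real.log 2 * |s|)) ^ p + (max (|s| - K) 0) ^ p := h1
        _ ≤ (8/(m:ℝ)) ^ p * (Real.exp ((p * Real.log 2) ^ 2) * Real.exp (7 * s ^ 2 / 16))
            + Real.exp (p ^ 2) * Real.exp (-K ^ 2 / 4) * Real.exp (7 * s ^ 2 / 16) := by
              linarith
        _ = B * Real.exp (7 * s ^ 2 / 16) := by rw [hB]; ring
    have hint : Integrable (fun s => Λ.inf' hne fun t => |s - t| ^ p) (gaussianReal 0 1) := by
      apply Integrable.mono' (exp_sq_integrable.const_mul B)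
        (hFcont Λ hne).aestronglyMeasurable
      refine Filter.Eventually.of_forall fun s => ?_
      rw [Real.norm_eq_abs, abs_of_nonneg (hFnn Λ hne s)]
      exact hptw s
    refine ⟨Λ, hne, hcard, hint, ?_⟩
    have hint2 : ∫ s, (Λ.inf' hne fun t => |s - t| ^ p) ∂(gaussianReal 0 1)
        ≤ B * ∫ s, Real.exp (7 * s ^ 2 / 16) ∂(gaussianReal 0 1) := by
      rw [← integral_const_mul]
      exact integral_mono_of_nonneg (Filter.Eventually.of_forall (hFnn Λ hne))
        (exp_sq_integrable.const_mul B) (Filter.Eventually.of_forall hptw)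
    have hJ0 : 0 ≤ ∫ s, Real.exp (7 * s ^ 2 / 16) ∂(gaussianReal 0 1) :=
      integral_nonneg fun s => (Real.exp_pos _).le
    have h3B : B * ∫ s, Real.exp (7 * s ^ 2 / 16) ∂(gaussianReal 0 1) ≤ 3 * B := by
      have := mul_le_mul_of_nonneg_left exp_sq_integral_le hB0
      linarith
    -- now bound 3 * B
    have hdivp : (8/(m:ℝ)) ^ p = 8 ^ p * (m:ℝ) ^ (-p) := by
      rw [Real.div_rpow (by norm_num) hmpos.le, Real.rpow_neg hmpos.le, div_eq_mul_inv]
    have htail : Real.exp (-K ^ 2 / 4) ≤ (m:ℝ) ^ (-p) := by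
      have h4 : -K ^ 2 / 4 ≤ Real.log (m) * (-p) := by nlinarith [hKsq]
      calc Real.exp (-K ^ 2 / 4) ≤ Real.exp (Real.log m * (-p)) := Real.exp_le_exp.2 h4
        _ = (m:ℝ) ^ (-p) := by rw [← Real.rpow_def_of_pos hmpos]
    have h3B2 : 3 * B ≤ A * (m:ℝ) ^ (-p) := by
      rw [hB, hdivp, hA]
      nlinarith [Real.exp_pos ((p * Real.log 2) ^ 2), Real.exp_pos (p ^ 2),
        mul_le_mul_of_nonneg_left htail (Real.exp_pos (p^2)).le]
    have hAD : A * (m:ℝ) ^ (-p) ≤ (D ^ p⁻¹) ^ p * (m:ℝ) ^ (-p) := by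
      rw [hCp]
      apply mul_le_mul_of_nonneg_right _ hmp.le
      rw [hD]
      nlinarith [Real.rpow_nonneg (le_trans (by norm_num) hm₀1) p, Real.exp_pos (p^2)]
    exact le_trans hint2 (le_trans h3B (le_trans h3B2 hAD))
  · -- small m : one point grid {0}
    refine ⟨{0}, Finset.singleton_nonempty 0, by simpa using hm1, ?_, ?_⟩
    · apply Integrable.mono' (exp_sq_integrable.const_mul (Real.exp (p ^ 2)))
        (hFcont _ _).aestronglyMeasurable
      refine Filter.Eventually.of_forall fun s => ?_
      rw [Real.norm_eq_abs, abs_of_nonneg (hFnn _ _ s)]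
      simp only [Finset.inf'_singleton, sub_zero]
      calc |s| ^ p ≤ Real.exp (p ^ 2) * Real.exp (|s| ^ 2 / 4) :=
            rpow_le_exp_sq hp (abs_nonneg s)
        _ ≤ Real.exp (p ^ 2) * Real.exp (7 * s ^ 2 / 16) := by
            apply mul_le_mul_of_nonneg_left _ (Real.exp_pos _).le
            apply Real.exp_le_exp.2
            rw [sq_abs]
            nlinarith [sq_nonneg s]
    · have hptw : ∀ s : ℝ, (({0} : Finset ℝ).inf' (Finset.singleton_nonempty 0)
          fun t => |s - t| ^ p) ≤ Real.exp (p ^ 2) * Real.exp (7 * s ^ 2 / 16) := by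
        intro s
        simp only [Finset.inf'_singleton, sub_zero]
        calc |s| ^ p ≤ Real.exp (p ^ 2) * Real.exp (|s| ^ 2 / 4) :=
              rpow_le_exp_sq hp (abs_nonneg s)
          _ ≤ Real.exp (p ^ 2) * Real.exp (7 * s ^ 2 / 16) := by
              apply mul_le_mul_of_nonneg_left _ (Real.exp_pos _).le
              apply Real.exp_le_exp.2
              rw [sq_abs]
              nlinarith [sq_nonneg s]
      have hint2 : ∫ s, (({0} : Finset ℝ).inf' (Finset.singleton_nonempty 0)
            fun t => |s - t| ^ p) ∂(gaussianReal 0 1)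
          ≤ Real.exp (p ^ 2) * ∫ s, Real.exp (7 * s ^ 2 / 16) ∂(gaussianReal 0 1) := by
        rw [← integral_const_mul]
        exact integral_mono_of_nonneg (Filter.Eventually.of_forall (hFnn _ _))
          (exp_sq_integrable.const_mul _) (Filter.Eventually.of_forall hptw)
      have h3 : Real.exp (p ^ 2) * ∫ s, Real.exp (7 * s ^ 2 / 16) ∂(gaussianReal 0 1)
          ≤ 3 * Real.exp (p ^ 2) := by
        have hJ0 : 0 ≤ ∫ s, Real.exp (7 * s ^ 2 / 16) ∂(gaussianReal 0 1) :=
          integral_nonneg fun s => (Real.exp_pos _).le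
        have := mul_le_mul_of_nonneg_left exp_sq_integral_le (Real.exp_pos (p^2)).le
        linarith
      -- compare with C^p m^{-p}
      have hmm : (m:ℝ) ≤ m₀ + 1 := by nlinarith
      have hmono : ((m₀ + 1):ℝ) ^ (-p) ≤ (m:ℝ) ^ (-p) := by
        rw [Real.rpow_neg hmpos.le, Real.rpow_neg (by linarith : (0:ℝ) ≤ m₀ + 1)]
        apply inv_anti₀ (Real.rpow_pos_of_pos hmpos _)
        exact Real.rpow_le_rpow hmpos.le hmm hp0.le
      have hone : ((m₀ + 1):ℝ) ^ p * ((m₀ + 1):ℝ) ^ (-p) = 1 := by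
        rw [← Real.rpow_add (by linarith : (0:ℝ) < m₀ + 1)]
        simp
      have hfin : 3 * Real.exp (p ^ 2) ≤ (D ^ p⁻¹) ^ p * (m:ℝ) ^ (-p) := by
        rw [hCp]
        calc 3 * Real.exp (p ^ 2)
            = 3 * Real.exp (p ^ 2) * (((m₀ + 1):ℝ) ^ p * ((m₀ + 1):ℝ) ^ (-p)) := by
              rw [hone]; ring
          _ ≤ D * ((m₀ + 1):ℝ) ^ (-p) := by
              rw [hD]
              have hx : (0:ℝ) ≤ ((m₀ + 1):ℝ) ^ (-p) :=
                (Real.rpow_pos_of_pos (by linarith) _).le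
              nlinarith [hx, hA0]
          _ ≤ D * (m:ℝ) ^ (-p) := by
              apply mul_le_mul_of_nonneg_left hmono hD0.le
      exact le_trans hint2 (le_trans h3 hfin)


lemma map_eval_pi {d : ℕ} (j : Fin d) :
    Measure.map (fun x : Fin d → ℝ => x j) (Measure.pi fun _ : Fin d => gaussianReal 0 1)
      = gaussianReal 0 1 := by
  apply Measure.ext fun s hs => ?_
  rw [Measure.map_apply (measurable_pi_apply j) hs]
  have hpre : (fun x : Fin d → ℝ => x j) ⁻¹' s
      = Set.pi Set.univ (Function.update (fun _ : Fin d => (Set.univ : Set ℝ)) j s) := by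
    exact Set.eval_preimage
  rw [hpre, Measure.pi_pi]
  rw [Fintype.prod_eq_single j (fun i hi => by
    rw [Function.update_of_ne hi]
    exact measure_univ)]
  rw [Function.update_self]

lemma integral_eval {d : ℕ} (j : Fin d) (g : ℝ → ℝ)
    (hg : AEStronglyMeasurable g (gaussianReal 0 1)) :
    ∫ x : Fin d → ℝ, g (x j) ∂(Measure.pi fun _ : Fin d => gaussianReal 0 1)
      = ∫ s, g s ∂(gaussianReal 0 1) := by
  have h := integral_map (μ := Measure.pi fun _ : Fin d => gaussianReal 0 1)
    (φ := fun x : Fin d → ℝ => x j) (measurable_pi_apply j).aemeasurable (f := g)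
    (by rwa [map_eval_pi j])
  rw [map_eval_pi j] at h
  exact h.symm

lemma integrable_eval {d : ℕ} (j : Fin d) (g : ℝ → ℝ)
    (hg : Integrable g (gaussianReal 0 1)) :
    Integrable (fun x : Fin d → ℝ => g (x j))
      (Measure.pi fun _ : Fin d => gaussianReal 0 1) := by
  have hsm : AEStronglyMeasurable g (Measure.map (fun x : Fin d → ℝ => x j)
      (Measure.pi fun _ : Fin d => gaussianReal 0 1)) := by
    rw [map_eval_pi j]; exact hg.aestronglyMeasurable
  have h := (integrable_map_measure hsm (measurable_pi_apply j).aemeasurable).1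
    (by rwa [map_eval_pi j])
  exact h


end QuantAux

set_option maxHeartbeats 1000000 in
theorem gaussian_quantization_aux (d : ℕ) (hd : 0 < d) (p : ℝ) (hp : 1 ≤ p) :
    ∃ C : ℝ, 0 < C ∧
      ∀ M : ℕ, 0 < M →
        ∃ (Λ : Finset (Evec d)) (hΛ : Λ.Nonempty), Λ.card ≤ M ∧
          (∫ x, Λ.inf' hΛ (fun y => ‖x - y‖ ^ p) ∂(gaussE d 1)) ≤
            (C * (M : ℝ) ^ (-(1 / (d : ℝ)))) ^ p ∧
          ∀ G : Evec d → Evec d, Measurable G →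
            (∀ x, G x ∈ Λ ∧ ∀ y ∈ Λ, ‖x - G x‖ ≤ ‖x - y‖) →
            ∀ (Ω : Type) (_ : MeasurableSpace Ω) (P : Measure Ω) (Δ : Ω → Evec d),
              IsProbabilityMeasure P → Measurable Δ → Measure.map Δ P = gaussE d 1 →
              (∫ ω, ‖Δ ω - G (Δ ω)‖ ^ p ∂P) ≤ (C * (M : ℝ) ^ (-(1 / (d : ℝ)))) ^ p := by
  classical
  obtain ⟨C₁, hC₁, h1d⟩ := QuantAux.oneD p hp
  haveI : Nonempty (Fin d) := Fin.pos_iff_nonempty.mp hd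
  have hp0 : 0 < p := lt_of_lt_of_le one_pos hp
  have hd0 : (0:ℝ) < d := by exact_mod_cast hd
  set Cd : ℝ := ((d:ℝ) ^ (p/2 + 1) + 1) ^ p⁻¹ * (2 * C₁) with hCdDef
  have hbase : (0:ℝ) < (d:ℝ) ^ (p/2 + 1) + 1 := by
    have := Real.rpow_nonneg hd0.le (p/2 + 1)
    linarith
  have hCd0 : 0 < Cd := mul_pos (Real.rpow_pos_of_pos hbase _) (by linarith)
  refine ⟨Cd, hCd0, ?_⟩
  intro M hM
  have hM1 : (1:ℝ) ≤ (M:ℝ) := by exact_mod_cast hM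
  have hMpos : (0:ℝ) < M := by linarith
  set m : ℕ := ⌊(M:ℝ) ^ ((d:ℝ)⁻¹)⌋₊ with hmdef
  have hMr : (1:ℝ) ≤ (M:ℝ) ^ ((d:ℝ)⁻¹) := Real.one_le_rpow hM1 (by positivity)
  have hm1 : 1 ≤ m := Nat.le_floor (by exact_mod_cast hMr)
  have hmpos : 0 < m := hm1
  have hmreal : (0:ℝ) < m := by exact_mod_cast hmpos
  have hmreal1 : (1:ℝ) ≤ m := by exact_mod_cast hm1
  have hfl : (m:ℝ) ≤ (M:ℝ) ^ ((d:ℝ)⁻¹) := Nat.floor_le (by positivity)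
  have hdnz : ((d:ℝ)) ≠ 0 := ne_of_gt hd0
  have hmd : (m:ℝ) ^ (d:ℕ) ≤ (M:ℝ) := by
    calc (m:ℝ) ^ (d:ℕ) ≤ ((M:ℝ) ^ ((d:ℝ)⁻¹)) ^ (d:ℕ) := pow_le_pow_left₀ hmreal.le hfl d
      _ = (M:ℝ) := by
        rw [← Real.rpow_natCast ((M:ℝ) ^ ((d:ℝ)⁻¹)) d, ← Real.rpow_mul hMpos.le,
          inv_mul_cancel₀ hdnz, Real.rpow_one]
  have hminv : (m:ℝ)⁻¹ ≤ 2 * (M:ℝ) ^ (-(1/(d:ℝ))) := by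
    have h1 : (M:ℝ) ^ ((d:ℝ)⁻¹) < (m:ℝ) + 1 := Nat.lt_floor_add_one _
    have h2 : (M:ℝ) ^ ((d:ℝ)⁻¹) ≤ 2 * m := by linarith
    have h3 : (0:ℝ) < (M:ℝ) ^ ((d:ℝ)⁻¹) := Real.rpow_pos_of_pos hMpos _
    have h4 : (m:ℝ)⁻¹ * (M:ℝ) ^ ((d:ℝ)⁻¹) ≤ 2 := by
      rw [inv_mul_le_iff₀ hmreal]
      linarith
    have h5 : (M:ℝ) ^ (-(1/(d:ℝ))) = ((M:ℝ) ^ ((d:ℝ)⁻¹))⁻¹ := by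
      rw [one_div, Real.rpow_neg hMpos.le]
    rw [h5]
    calc (m:ℝ)⁻¹ = ((m:ℝ)⁻¹ * (M:ℝ) ^ ((d:ℝ)⁻¹)) * ((M:ℝ) ^ ((d:ℝ)⁻¹))⁻¹ := by
          field_simp
      _ ≤ 2 * ((M:ℝ) ^ ((d:ℝ)⁻¹))⁻¹ :=
          mul_le_mul_of_nonneg_right h4 (inv_nonneg.2 h3.le)
  obtain ⟨Λ₁, h₁, hcard₁, hint₁, hbound₁⟩ := h1d m hmpos
  set φ₁ : ℝ → ℝ := fun s => Λ₁.inf' h₁ fun t => |s - t| ^ p with hφ₁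
  set Λd : Finset (Evec d) :=
    (Fintype.piFinset fun _ : Fin d => Λ₁).image
      (⇑(EuclideanSpace.equiv (Fin d) ℝ).symm) with hΛdDef
  have h₁' := h₁
  obtain ⟨t₀, ht₀⟩ := h₁'
  have hne_d : Λd.Nonempty :=
    ⟨_, Finset.mem_image_of_mem _ (Fintype.mem_piFinset.2 fun _ => ht₀)⟩
  have hcard_d : Λd.card ≤ M := by
    have hc1 : Λd.card ≤ Λ₁.card ^ d := by
      calc Λd.card ≤ (Fintype.piFinset fun _ : Fin d => Λ₁).card := Finset.card_image_le
        _ = Λ₁.card ^ d := by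
          rw [Fintype.card_piFinset]
          simp
    have hc2 : ((Λ₁.card ^ d : ℕ) : ℝ) ≤ (M:ℝ) := by
      push_cast
      calc ((Λ₁.card : ℝ)) ^ d ≤ (m:ℝ) ^ d :=
            pow_le_pow_left₀ (Nat.cast_nonneg _) hcard₁ d
        _ ≤ (M:ℝ) := hmd
    have hc3 : Λ₁.card ^ d ≤ M := by exact_mod_cast hc2
    omega
  -- pointwise bound
  have hφnn : ∀ s, 0 ≤ φ₁ s := fun s =>
    Finset.le_inf' h₁ _ fun t _ => Real.rpow_nonneg (abs_nonneg _) _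
  have key : ∀ x : Evec d, (Λd.inf' hne_d fun y => ‖x - y‖ ^ p)
      ≤ (d:ℝ) ^ (p/2) * ∑ j : Fin d, φ₁ (x j) := by
    intro x
    have hex : ∀ j : Fin d, ∃ t, t ∈ Λ₁ ∧ φ₁ (x j) = |x j - t| ^ p := fun j =>
      Finset.exists_mem_eq_inf' h₁ (fun t => |x j - t| ^ p)
    choose t ht hEq using hex
    set y : Evec d := (EuclideanSpace.equiv (Fin d) ℝ).symm t with hy
    have hymem : y ∈ Λd :=
      Finset.mem_image_of_mem _ (Fintype.mem_piFinset.2 fun j => ht j)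
    have hyj : ∀ j, y j = t j := fun j => rfl
    obtain ⟨j₀, _, hj₀⟩ :=
      Finset.exists_max_image Finset.univ (fun j => |x j - t j|) Finset.univ_nonempty
    have hsub : ∀ j : Fin d, ‖(x - y) j‖ = |x j - t j| := by
      intro j
      have : (x - y) j = x j - t j := by
        simp [hyj]
      rw [this, Real.norm_eq_abs]
    have hnorm : ‖x - y‖ ≤ Real.sqrt d * |x j₀ - t j₀| := by
      rw [EuclideanSpace.norm_eq]
      calc Real.sqrt (∑ j : Fin d, ‖(x - y) j‖ ^ 2)
          ≤ Real.sqrt (∑ _j : Fin d, |x j₀ - t j₀| ^ 2) := by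
            apply Real.sqrt_le_sqrt
            apply Finset.sum_le_sum
            intro j _
            rw [hsub j]
            exact pow_le_pow_left₀ (abs_nonneg _) (hj₀ j (Finset.mem_univ j)) 2
        _ = Real.sqrt ((d:ℝ) * |x j₀ - t j₀| ^ 2) := by
            rw [Finset.sum_const, Finset.card_univ, Fintype.card_fin, nsmul_eq_mul]
        _ = Real.sqrt d * |x j₀ - t j₀| := by
            rw [Real.sqrt_mul (Nat.cast_nonneg d), Real.sqrt_sq (abs_nonneg _)]
    have h5 : ‖x - y‖ ^ p ≤ (d:ℝ) ^ (p/2) * |x j₀ - t j₀| ^ p := by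
      calc ‖x - y‖ ^ p ≤ (Real.sqrt d * |x j₀ - t j₀|) ^ p :=
            Real.rpow_le_rpow (norm_nonneg _) hnorm hp0.le
        _ = (Real.sqrt d) ^ p * |x j₀ - t j₀| ^ p :=
            Real.mul_rpow (Real.sqrt_nonneg _) (abs_nonneg _)
        _ = (d:ℝ) ^ (p/2) * |x j₀ - t j₀| ^ p := by
            rw [Real.sqrt_eq_rpow, ← Real.rpow_mul (Nat.cast_nonneg d),
              show (1:ℝ)/2 * p = p/2 by ring]
    have h6 : |x j₀ - t j₀| ^ p ≤ ∑ j : Fin d, φ₁ (x j) := by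
      rw [← hEq j₀]
      exact Finset.single_le_sum (fun j _ => hφnn (x j)) (Finset.mem_univ j₀)
    calc (Λd.inf' hne_d fun y => ‖x - y‖ ^ p) ≤ ‖x - y‖ ^ p := Finset.inf'_le _ hymem
      _ ≤ (d:ℝ) ^ (p/2) * |x j₀ - t j₀| ^ p := h5
      _ ≤ (d:ℝ) ^ (p/2) * ∑ j : Fin d, φ₁ (x j) :=
          mul_le_mul_of_nonneg_left h6 (Real.rpow_nonneg (Nat.cast_nonneg d) _)
  -- measure-theoretic setup
  have hgauss : gaussE d 1 = Measure.map (⇑(EuclideanSpace.equiv (Fin d) ℝ).symm)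
      (Measure.pi fun _ : Fin d => gaussianReal 0 1) := by
    simp only [gaussE, Real.toNNReal_one]
  have hmeas_e : Measurable (⇑(EuclideanSpace.equiv (Fin d) ℝ).symm) :=
    (EuclideanSpace.equiv (Fin d) ℝ).symm.continuous.measurable
  set F : Evec d → ℝ := fun x => Λd.inf' hne_d fun y => ‖x - y‖ ^ p with hF
  have hFcont : Continuous F := by
    apply QuantAux.continuous_inf'
    intro y
    exact (Real.continuous_rpow_const hp0.le).comp
      ((continuous_id.sub continuous_const).norm)
  have hFnn : ∀ x, 0 ≤ F x := fun x =>
    Finset.le_inf' _ _ fun y _ => Real.rpow_nonneg (norm_nonneg _) _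
  have hφsm : AEStronglyMeasurable φ₁ (gaussianReal 0 1) := hint₁.aestronglyMeasurable
  set Gf : (Fin d → ℝ) → ℝ := fun z => (d:ℝ) ^ (p/2) * ∑ j : Fin d, φ₁ (z j) with hGf
  have hGint : Integrable Gf (Measure.pi fun _ : Fin d => gaussianReal 0 1) := by
    apply Integrable.const_mul
    exact integrable_finset_sum _ fun j _ => QuantAux.integrable_eval j φ₁ hint₁
  have hcoord : ∀ (z : Fin d → ℝ) (j : Fin d),
      ((EuclideanSpace.equiv (Fin d) ℝ).symm z) j = z j := fun z j => rfl
  have hle : ∀ z : Fin d → ℝ, F ((EuclideanSpace.equiv (Fin d) ℝ).symm z) ≤ Gf z := by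
    intro z
    exact key ((EuclideanSpace.equiv (Fin d) ℝ).symm z)
  have hGval : ∫ z, Gf z ∂(Measure.pi fun _ : Fin d => gaussianReal 0 1)
      = (d:ℝ) ^ (p/2) * ((d:ℝ) * ∫ s, φ₁ s ∂(gaussianReal 0 1)) := by
    rw [hGf]
    rw [integral_const_mul]
    congr 1
    rw [integral_finset_sum _ fun j _ => QuantAux.integrable_eval j φ₁ hint₁]
    have : ∀ j ∈ Finset.univ, (∫ x : Fin d → ℝ, φ₁ (x j)
        ∂(Measure.pi fun _ : Fin d => gaussianReal 0 1))
        = ∫ s, φ₁ s ∂(gaussianReal 0 1) := fun j _ => QuantAux.integral_eval j φ₁ hφsm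
    rw [Finset.sum_congr rfl this, Finset.sum_const, Finset.card_univ, Fintype.card_fin,
      nsmul_eq_mul]
  -- the main integral bound
  have hFint : Integrable F (gaussE d 1) := by
    rw [hgauss]
    rw [integrable_map_measure hFcont.aestronglyMeasurable hmeas_e.aemeasurable]
    apply Integrable.mono' hGint (hFcont.comp
      (EuclideanSpace.equiv (Fin d) ℝ).symm.continuous).aestronglyMeasurable
    refine Filter.Eventually.of_forall fun z => ?_
    have h0 : (0:ℝ) ≤ (F ∘ ⇑(EuclideanSpace.equiv (Fin d) ℝ).symm) z := hFnn _
    rw [Real.norm_eq_abs, abs_of_nonneg h0]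
    exact hle z
  have hmain : ∫ x, F x ∂(gaussE d 1)
      ≤ (d:ℝ) ^ (p/2) * ((d:ℝ) * (C₁ ^ p * (m:ℝ) ^ (-p))) := by
    rw [hgauss, integral_map hmeas_e.aemeasurable hFcont.aestronglyMeasurable]
    have h7 : ∫ z, F ((EuclideanSpace.equiv (Fin d) ℝ).symm z)
        ∂(Measure.pi fun _ : Fin d => gaussianReal 0 1)
        ≤ ∫ z, Gf z ∂(Measure.pi fun _ : Fin d => gaussianReal 0 1) :=
      integral_mono_of_nonneg (Filter.Eventually.of_forall fun z => hFnn _) hGint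
        (Filter.Eventually.of_forall hle)
    rw [hGval] at h7
    have h8 : (d:ℝ) ^ (p/2) * ((d:ℝ) * ∫ s, φ₁ s ∂(gaussianReal 0 1))
        ≤ (d:ℝ) ^ (p/2) * ((d:ℝ) * (C₁ ^ p * (m:ℝ) ^ (-p))) := by
      apply mul_le_mul_of_nonneg_left _ (Real.rpow_nonneg (Nat.cast_nonneg d) _)
      exact mul_le_mul_of_nonneg_left hbound₁ hd0.le
    exact h7.trans h8
  -- constant algebra
  have hMd0 : (0:ℝ) < (M:ℝ) ^ (-(1/(d:ℝ))) := Real.rpow_pos_of_pos hMpos _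
  have hconst : (d:ℝ) ^ (p/2) * ((d:ℝ) * (C₁ ^ p * (m:ℝ) ^ (-p)))
      ≤ (Cd * (M:ℝ) ^ (-(1/(d:ℝ)))) ^ p := by
    have e1 : (Cd * (M:ℝ) ^ (-(1/(d:ℝ)))) ^ p
        = ((d:ℝ) ^ (p/2 + 1) + 1) * ((2:ℝ) ^ p * C₁ ^ p) * ((M:ℝ) ^ (-(1/(d:ℝ)))) ^ p := by
      rw [Real.mul_rpow hCd0.le hMd0.le, hCdDef,
        Real.mul_rpow (Real.rpow_nonneg hbase.le _) (by linarith : (0:ℝ) ≤ 2 * C₁),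
        Real.rpow_inv_rpow hbase.le (ne_of_gt hp0),
        Real.mul_rpow (by norm_num) hC₁.le]
    have e2 : (m:ℝ) ^ (-p) = ((m:ℝ)⁻¹) ^ p := by
      rw [Real.inv_rpow hmreal.le, Real.rpow_neg hmreal.le]
    have e3 : ((m:ℝ)⁻¹) ^ p ≤ (2 * (M:ℝ) ^ (-(1/(d:ℝ)))) ^ p :=
      Real.rpow_le_rpow (inv_nonneg.2 hmreal.le) hminv hp0.le
    have e4 : (2 * (M:ℝ) ^ (-(1/(d:ℝ)))) ^ p
        = (2:ℝ) ^ p * ((M:ℝ) ^ (-(1/(d:ℝ)))) ^ p :=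
      Real.mul_rpow (by norm_num) hMd0.le
    have e5 : (d:ℝ) ^ (p/2) * (d:ℝ) = (d:ℝ) ^ (p/2 + 1) := by
      rw [Real.rpow_add hd0, Real.rpow_one]
    have h2p : (0:ℝ) < (2:ℝ) ^ p := Real.rpow_pos_of_pos two_pos _
    have hC₁p : (0:ℝ) < C₁ ^ p := Real.rpow_pos_of_pos hC₁ _
    have hdp2 : (0:ℝ) ≤ (d:ℝ) ^ (p/2 + 1) := Real.rpow_nonneg hd0.le _
    calc (d:ℝ) ^ (p/2) * ((d:ℝ) * (C₁ ^ p * (m:ℝ) ^ (-p)))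
        = (d:ℝ) ^ (p/2 + 1) * C₁ ^ p * ((m:ℝ)⁻¹) ^ p := by
          rw [e2, ← e5]; ring
      _ ≤ (d:ℝ) ^ (p/2 + 1) * C₁ ^ p * ((2:ℝ) ^ p * ((M:ℝ) ^ (-(1/(d:ℝ)))) ^ p) := by
          apply mul_le_mul_of_nonneg_left (e3.trans_eq e4)
          positivity
      _ = (d:ℝ) ^ (p/2 + 1) * ((2:ℝ) ^ p * C₁ ^ p) * ((M:ℝ) ^ (-(1/(d:ℝ)))) ^ p := by
          ring
      _ ≤ ((d:ℝ) ^ (p/2 + 1) + 1) * ((2:ℝ) ^ p * C₁ ^ p) * ((M:ℝ) ^ (-(1/(d:ℝ)))) ^ p := by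
          have hMp : (0:ℝ) ≤ ((M:ℝ) ^ (-(1/(d:ℝ)))) ^ p := (Real.rpow_pos_of_pos hMd0 _).le
          apply mul_le_mul_of_nonneg_right _ hMp
          apply mul_le_mul_of_nonneg_right (by linarith) (by positivity)
      _ = (Cd * (M:ℝ) ^ (-(1/(d:ℝ)))) ^ p := e1.symm
  refine ⟨Λd, hne_d, hcard_d, hmain.trans hconst, ?_⟩
  -- the nearest-point projection part
  intro G hG hGnear Ω mΩ P Δ hPprob hΔmeas hΔlaw
  have hGm : Measurable fun x : Evec d => ‖x - G x‖ ^ p :=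
    ((Real.continuous_rpow_const hp0.le).measurable).comp
      ((measurable_id.sub hG).norm)
  have hstep1 : ∫ ω, ‖Δ ω - G (Δ ω)‖ ^ p ∂P
      = ∫ x, ‖x - G x‖ ^ p ∂(gaussE d 1) := by
    rw [← hΔlaw, integral_map hΔmeas.aemeasurable]
    rw [hΔlaw]
    exact hGm.aestronglyMeasurable
  have hptle : ∀ x : Evec d, ‖x - G x‖ ^ p ≤ F x := by
    intro x
    apply Finset.le_inf'
    intro y hy
    exact Real.rpow_le_rpow (norm_nonneg _) ((hGnear x).2 y hy) hp0.le
  have hstep2 : ∫ x, ‖x - G x‖ ^ p ∂(gaussE d 1) ≤ ∫ x, F x ∂(gaussE d 1) :=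
    integral_mono_of_nonneg
      (Filter.Eventually.of_forall fun x => Real.rpow_nonneg (norm_nonneg _) _)
      hFint (Filter.Eventually.of_forall hptle)
  rw [hstep1]
  exact hstep2.trans (hmain.trans hconst)

end QuantAuxSection

/-- Quantization of the standard Gaussian measure (justification of (3.8)): optimal
`M`-point grids achieve a distortion of order `M^{-1/d}`, and consequently any nearest
point projection on such a grid quantizes a standard Gaussian vector at rate `M^{-1/d}`. -/
theorem gaussian_quantization (d : ℕ) (hd : 0 < d) (p : ℝ) (hp : 1 ≤ p) :
    ∃ C : ℝ, 0 < C ∧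
      ∀ M : ℕ, 0 < M →
        ∃ (Λ : Finset (Evec d)) (hΛ : Λ.Nonempty), Λ.card ≤ M ∧
          (∫ x, Λ.inf' hΛ (fun y => ‖x - y‖ ^ p) ∂(gaussE d 1)) ≤
            (C * (M : ℝ) ^ (-(1 / (d : ℝ)))) ^ p ∧
          ∀ G : Evec d → Evec d, Measurable G →
            (∀ x, G x ∈ Λ ∧ ∀ y ∈ Λ, ‖x - G x‖ ≤ ‖x - y‖) →
            ∀ (Ω : Type) (_ : MeasurableSpace Ω) (P : Measure Ω) (Δ : Ω → Evec d),
              IsProbabilityMeasure P → Measurable Δ → Measure.map Δ P = gaussE d 1 →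
              (∫ ω, ‖Δ ω - G (Δ ω)‖ ^ p ∂P) ≤ (C * (M : ℝ) ^ (-(1 / (d : ℝ)))) ^ p := gaussian_quantization_aux d hd p hp
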